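/- Let M ∈ ℝ^{m×m} be a matrix such that 0 is a simple eigenvalue of M and every nonzero eigenvalue of M has strictly negative real part. Then for every x_0 ∈ ℝ^m, the limit lim_{t→∞} e^{tM} x_0 exists and belongs to ker M; in other words, every solution of the linear ODE ẋ = Mx converges to an equilibrium as t → ∞. -/

import Mathlib

open Matrix

noncomputable section

open Polynomial Filter NormedSpace

variable {m : ℕ}

-- tsum formula for exp applied to a vector
lemma mulVec_exp_eq_tsum (A : Matrix (Fin m) (Fin m) ℂ) (v : Fin m → ℂ) :
    (exp A).mulVec v = ∑' n : ℕ, ((n.factorial : ℝ))⁻¹ • ((A ^ n).mulVec v) := by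
  letI : SeminormedRing (Matrix (Fin m) (Fin m) ℂ) := Matrix.linftyOpSemiNormedRing
  letI : NormedRing (Matrix (Fin m) (Fin m) ℂ) := Matrix.linftyOpNormedRing
  letI : NormedAlgebra ℝ (Matrix (Fin m) (Fin m) ℂ) := Matrix.linftyOpNormedAlgebra
  have hsum : Summable (fun n : ℕ => ((n.factorial : ℝ))⁻¹ • A ^ n) := expSeries_summable' A
  let f : Matrix (Fin m) (Fin m) ℂ →ₗ[ℝ] (Fin m → ℂ) :=
    { toFun := fun B => B.mulVec v
      map_add' := fun B C => Matrix.add_mulVec B C v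
      map_smul' := fun c B => Matrix.smul_mulVec c B v }
  have hf : Continuous f := f.continuous_of_finiteDimensional
  have := (ContinuousLinearMap.map_tsum ⟨f, hf⟩ hsum)
  rw [exp_eq_tsum ℝ]
  simpa [f] using this


lemma mulVec_exp_eq_finsum (A : Matrix (Fin m) (Fin m) ℂ) (v : Fin m → ℂ) (k : ℕ)
    (hv : (A ^ k).mulVec v = 0) (t : ℝ) :
    (exp (t • A)).mulVec v
      = ∑ n ∈ Finset.range k, (t ^ n * ((n.factorial : ℝ))⁻¹) • ((A ^ n).mulVec v) := by
  have hzero : ∀ n, k ≤ n → (A ^ n).mulVec v = 0 := by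
    intro n hn
    have : A ^ n = A ^ (n - k) * A ^ k := by rw [← pow_add]; congr 1; omega
    rw [this, ← Matrix.mulVec_mulVec, hv, Matrix.mulVec_zero]
  rw [mulVec_exp_eq_tsum]
  rw [tsum_eq_sum (s := Finset.range k) ?h]
  case h =>
    intro n hn
    rw [_root_.smul_pow, Matrix.smul_mulVec, hzero n (by simpa using hn)]
    simp
  · refine Finset.sum_congr rfl fun n hn => ?_
    rw [_root_.smul_pow, Matrix.smul_mulVec, smul_smul]
    ring_nf

lemma mulVec_exp_of_kernel (A : Matrix (Fin m) (Fin m) ℂ) (v : Fin m → ℂ)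
    (hv : A.mulVec v = 0) (t : ℝ) : (exp (t • A)).mulVec v = v := by
  have h1 : (A ^ 1).mulVec v = 0 := by simpa using hv
  rw [mulVec_exp_eq_finsum A v 1 h1 t]
  simp

-- scalar coefficient limit
lemma coef_tendsto (lam : ℂ) (hl : lam.re < 0) (n : ℕ) (c : ℂ) :
    Tendsto (fun t : ℝ => Complex.exp (t • lam) * ((t : ℂ) ^ n * c)) atTop (nhds 0) := by
  rw [tendsto_zero_iff_norm_tendsto_zero]
  have key : Tendsto (fun t : ℝ => t ^ n * Real.exp (lam.re * t)) atTop (nhds 0) := by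
    have h1 : Tendsto (fun t : ℝ => (-lam.re) * t) atTop atTop :=
      Tendsto.const_mul_atTop (by linarith) tendsto_id
    have h2 := (Real.tendsto_pow_mul_exp_neg_atTop_nhds_zero n).comp h1
    have h3 := h2.const_mul ((-lam.re) ^ n)⁻¹
    rw [mul_zero] at h3
    refine h3.congr fun t => ?_
    have hbn : (-lam.re) ^ n ≠ 0 := pow_ne_zero _ (by linarith)
    simp only [Function.comp_apply, mul_pow, neg_mul, neg_neg]
    field_simp
    ring
  have h4 := key.mul_const ‖c‖
  rw [zero_mul] at h4
  refine h4.congr' ?_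
  filter_upwards [eventually_ge_atTop 0] with t ht
  have he : ‖Complex.exp (t • lam)‖ = Real.exp (lam.re * t) := by
    rw [Complex.norm_exp, Complex.real_smul, Complex.re_ofReal_mul, mul_comm]
  rw [norm_mul, norm_mul, he, norm_pow, Complex.norm_real, Real.norm_eq_abs, abs_of_nonneg ht]
  ring

lemma exp_smul_eq_scalar_smul (A : Matrix (Fin m) (Fin m) ℂ) (lam : ℂ) (t : ℝ) :
    exp (t • A) = Complex.exp (t • lam) • exp (t • (A - lam • 1)) := by
  have key : exp (algebraMap ℂ (Matrix (Fin m) (Fin m) ℂ) (t • lam))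
      = algebraMap ℂ (Matrix (Fin m) (Fin m) ℂ) (Complex.exp (t • lam)) := by
    letI : SeminormedRing (Matrix (Fin m) (Fin m) ℂ) := Matrix.linftyOpSemiNormedRing
    letI : NormedRing (Matrix (Fin m) (Fin m) ℂ) := Matrix.linftyOpNormedRing
    letI : NormedAlgebra ℂ (Matrix (Fin m) (Fin m) ℂ) := Matrix.linftyOpNormedAlgebra
    rw [Complex.exp_eq_exp_ℂ]
    exact (map_exp (algebraMap ℂ (Matrix (Fin m) (Fin m) ℂ))
      (continuous_algebraMap ℂ (Matrix (Fin m) (Fin m) ℂ)) (t • lam)).symm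
  letI : SeminormedRing (Matrix (Fin m) (Fin m) ℂ) := Matrix.linftyOpSemiNormedRing
  letI : NormedRing (Matrix (Fin m) (Fin m) ℂ) := Matrix.linftyOpNormedRing
  letI : NormedAlgebra ℝ (Matrix (Fin m) (Fin m) ℂ) := Matrix.linftyOpNormedAlgebra
  have hsum : t • A = (t • lam) • (1 : Matrix (Fin m) (Fin m) ℂ) + t • (A - lam • 1) := by
    rw [smul_sub, smul_assoc]
    abel
  have hcomm : Commute ((t • lam) • (1 : Matrix (Fin m) (Fin m) ℂ)) (t • (A - lam • 1)) :=
    (Commute.one_left _).smul_left _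
  rw [hsum, Matrix.exp_add_of_commute _ _ hcomm]
  have h1 : ((t • lam) • (1 : Matrix (Fin m) (Fin m) ℂ))
      = algebraMap ℂ (Matrix (Fin m) (Fin m) ℂ) (t • lam) :=
    (Algebra.algebraMap_eq_smul_one _).symm
  rw [h1, key,
    Algebra.algebraMap_eq_smul_one, smul_mul_assoc, one_mul]

lemma tendsto_exp_mulVec_gen_eig (A : Matrix (Fin m) (Fin m) ℂ) (lam : ℂ) (hl : lam.re < 0)
    (k : ℕ) (v : Fin m → ℂ) (hv : (((A - lam • 1)) ^ k).mulVec v = 0) :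
    Tendsto (fun t : ℝ => (exp (t • A)).mulVec v) atTop (nhds 0) := by
  have heq : ∀ t : ℝ, (exp (t • A)).mulVec v
      = ∑ n ∈ Finset.range k,
          (Complex.exp (t • lam) * ((t : ℂ) ^ n * ((n.factorial : ℂ))⁻¹))
            • (((A - lam • 1) ^ n).mulVec v) := by
    intro t
    rw [exp_smul_eq_scalar_smul A lam t, Matrix.smul_mulVec,
      mulVec_exp_eq_finsum _ v k hv t, Finset.smul_sum]
    refine Finset.sum_congr rfl fun n hn => ?_
    rw [show ((t ^ n * ((n.factorial : ℝ))⁻¹) • (((A - lam • 1) ^ n).mulVec v))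
        = (((t : ℂ) ^ n * ((n.factorial : ℂ))⁻¹) • (((A - lam • 1) ^ n).mulVec v)) by
      rw [show ((t : ℂ) ^ n * ((n.factorial : ℂ))⁻¹)
          = algebraMap ℝ ℂ (t ^ n * ((n.factorial : ℝ))⁻¹) by push_cast [Complex.coe_algebraMap]; ring,
        algebraMap_smul], smul_smul]
  simp only [heq]
  have : (0 : Fin m → ℂ) = ∑ n ∈ Finset.range k, (0 : Fin m → ℂ) := by simp
  rw [this]
  refine tendsto_finset_sum _ fun n hn => ?_
  have := (coef_tendsto lam hl n ((n.factorial : ℂ))⁻¹).smul_const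
    (((A - lam • 1) ^ n).mulVec v)
  simpa using this

lemma tendsto_exp_mulVec_of_const (A : Matrix (Fin m) (Fin m) ℂ) (r : Polynomial ℂ)
    (h0 : r.natDegree = 0) (hr0 : r ≠ 0) (v : Fin m → ℂ)
    (hv : ((Polynomial.aeval A) r).mulVec v = 0) :
    Tendsto (fun t : ℝ => (exp (t • A)).mulVec v) atTop (nhds 0) := by
  have hc : r = Polynomial.C (r.coeff 0) := Polynomial.eq_C_of_natDegree_eq_zero h0
  have hc0 : r.coeff 0 ≠ 0 := by
    intro h; apply hr0; rw [hc, h, map_zero]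
  rw [hc, Polynomial.aeval_C, Algebra.algebraMap_eq_smul_one, Matrix.smul_mulVec,
    Matrix.one_mulVec, smul_eq_zero] at hv
  have hv0 : v = 0 := hv.resolve_left hc0
  subst hv0
  simp only [Matrix.mulVec_zero]
  exact tendsto_const_nhds

lemma tendsto_exp_mulVec_of_poly (A : Matrix (Fin m) (Fin m) ℂ) (d : ℕ) :
    ∀ (r : Polynomial ℂ), r.natDegree ≤ d → r ≠ 0 → (∀ z, r.IsRoot z → z.re < 0) →
    ∀ v : Fin m → ℂ, ((Polynomial.aeval A) r).mulVec v = 0 →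
    Tendsto (fun t : ℝ => (exp (t • A)).mulVec v) atTop (nhds 0) := by
  induction d with
  | zero =>
    intro r hdeg hr0 _ v hv
    exact tendsto_exp_mulVec_of_const A r (Nat.le_zero.mp hdeg) hr0 v hv
  | succ d ih =>
    intro r hdeg hr0 hroots v hv
    by_cases h0 : r.natDegree = 0
    · exact tendsto_exp_mulVec_of_const A r h0 hr0 v hv
    have hdegpos : 0 < r.degree := by
      rw [Polynomial.degree_eq_natDegree hr0]
      exact_mod_cast Nat.pos_of_ne_zero h0
    obtain ⟨lam, hlam⟩ := Complex.exists_root hdegpos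
    have hlre : lam.re < 0 := hroots lam hlam
    obtain ⟨s, hs, hnd⟩ := r.exists_eq_pow_rootMultiplicity_mul_and_not_dvd hr0 lam
    set a := r.rootMultiplicity lam with ha_def
    have ha : 0 < a := (Polynomial.rootMultiplicity_pos hr0).2 hlam
    have hs0 : s ≠ 0 := by
      intro h; apply hr0; rw [hs, h, mul_zero]
    have hcop : IsCoprime ((Polynomial.X - Polynomial.C lam) ^ a) s :=
      (((Polynomial.irreducible_X_sub_C lam).coprime_iff_not_dvd.2 hnd)).pow_left
    obtain ⟨u, w, huw⟩ := hcop
    have hnds : s.natDegree ≤ d := by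
      have h1 : r.natDegree = a + s.natDegree := by
        rw [hs, Polynomial.natDegree_mul (pow_ne_zero _ (Polynomial.X_sub_C_ne_zero lam)) hs0, Polynomial.natDegree_pow,
          Polynomial.natDegree_X_sub_C, mul_one]
      omega
    have hsroots : ∀ z, s.IsRoot z → z.re < 0 := by
      intro z hz
      refine hroots z ?_
      rw [Polynomial.IsRoot, hs, Polynomial.eval_mul, hz, mul_zero]
    set P := (Polynomial.X - Polynomial.C lam) ^ a with hP_def
    set v₁ := ((Polynomial.aeval A) (u * P)).mulVec v with hv1_def
    set v₂ := ((Polynomial.aeval A) (w * s)).mulVec v with hv2_def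
    have hv12 : v = v₁ + v₂ := by
      have : ((Polynomial.aeval A) (u * P + w * s)).mulVec v = v := by
        rw [huw, _root_.map_one, Matrix.one_mulVec]
      rw [← this, map_add, Matrix.add_mulVec]
    have hkill1 : ((Polynomial.aeval A) s).mulVec v₁ = 0 := by
      rw [hv1_def, Matrix.mulVec_mulVec, ← _root_.map_mul,
        show s * (u * P) = u * r by rw [hs]; ring, _root_.map_mul, ← Matrix.mulVec_mulVec, hv,
        Matrix.mulVec_zero]
    have hkill2 : (((A - lam • 1)) ^ a).mulVec v₂ = 0 := by
      have hPA : ((Polynomial.aeval A) P) = (A - lam • 1) ^ a := by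
        rw [hP_def, map_pow, map_sub, Polynomial.aeval_X, Polynomial.aeval_C,
          Algebra.algebraMap_eq_smul_one]
      rw [← hPA, hv2_def, Matrix.mulVec_mulVec, ← _root_.map_mul,
        show P * (w * s) = w * r by rw [hs]; ring, _root_.map_mul, ← Matrix.mulVec_mulVec, hv,
        Matrix.mulVec_zero]
    have t1 := ih s hnds hs0 hsroots v₁ hkill1
    have t2 := tendsto_exp_mulVec_gen_eig A lam hlre a v₂ hkill2
    have := t1.add t2
    rw [add_zero] at this
    refine this.congr fun t => ?_
    rw [hv12, Matrix.mulVec_add]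



/-!
Statement 16: if `0` is a simple eigenvalue of `M` and every nonzero eigenvalue
of `M` has strictly negative real part, then every solution of `ẋ = Mx`
(equivalently, `t ↦ e^{tM} x₀`) converges to a point of `ker M` as `t → ∞`.
-/

theorem stmt16_convergence_to_equilibrium {m : ℕ}
    (M : Matrix (Fin m) (Fin m) ℝ)
    (hsimple : Polynomial.rootMultiplicity 0 M.charpoly = 1)
    (hstable : ∀ z : ℂ, (M.charpoly.map (algebraMap ℝ ℂ)).IsRoot z → z ≠ 0 → z.re < 0)
    (x0 : Fin m → ℝ) :
    ∃ L : Fin m → ℝ, M.mulVec L = 0 ∧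
      Filter.Tendsto (fun t : ℝ => (NormedSpace.exp (t • M)).mulVec x0)
        Filter.atTop (nhds L) := by
  classical
  set Mc : Matrix (Fin m) (Fin m) ℂ := M.map (algebraMap ℝ ℂ) with hMc_def
  have hchar : Mc.charpoly = M.charpoly.map (algebraMap ℝ ℂ) :=
    M.charpoly_map (algebraMap ℝ ℂ)
  have hcp0 : M.charpoly ≠ 0 := (M.charpoly_monic).ne_zero
  obtain ⟨q, hq, hqnd⟩ := M.charpoly.exists_eq_pow_rootMultiplicity_mul_and_not_dvd hcp0 0
  rw [hsimple, pow_one, map_zero, sub_zero] at hq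
  rw [map_zero, sub_zero] at hqnd
  set qc : Polynomial ℂ := q.map (algebraMap ℝ ℂ) with hqc_def
  have hpc : Mc.charpoly = Polynomial.X * qc := by
    rw [hchar, hq, Polynomial.map_mul, Polynomial.map_X]
  have hq0 : q.coeff 0 ≠ 0 := fun h => hqnd (Polynomial.X_dvd_iff.2 h)
  have hqc0 : qc.coeff 0 ≠ 0 := by
    rw [hqc_def, Polynomial.coeff_map]
    intro h
    rw [Complex.coe_algebraMap] at h
    exact hq0 (by exact_mod_cast h)
  have hqcne : qc ≠ 0 := fun h => hqc0 (by rw [h]; simp)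
  have hqcnd : ¬ (Polynomial.X ∣ qc) := fun h => hqc0 (Polynomial.X_dvd_iff.1 h)
  have hqroots : ∀ z : ℂ, qc.IsRoot z → z.re < 0 := by
    intro z hz
    have hz0 : z ≠ 0 := by
      rintro rfl
      exact hqc0 (by rwa [Polynomial.coeff_zero_eq_eval_zero])
    refine hstable z ?_ hz0
    rw [← hchar, Polynomial.IsRoot, hpc, Polynomial.eval_mul, hz, mul_zero]
  have hCH : ((Polynomial.aeval Mc) Mc.charpoly).mulVec
      (fun i => (x0 i : ℂ)) = 0 := by
    rw [Matrix.aeval_self_charpoly, Matrix.zero_mulVec]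
  set xc : Fin m → ℂ := fun i => (x0 i : ℂ) with hxc_def
  obtain ⟨u, w, huw⟩ :=
    (Polynomial.irreducible_X.coprime_iff_not_dvd.2 hqcnd : IsCoprime Polynomial.X qc)
  set v₁ := ((Polynomial.aeval Mc) (u * Polynomial.X)).mulVec xc with hv1_def
  set v₂ := ((Polynomial.aeval Mc) (w * qc)).mulVec xc with hv2_def
  have hsplit : xc = v₁ + v₂ := by
    have : ((Polynomial.aeval Mc) (u * Polynomial.X + w * qc)).mulVec xc = xc := by
      rw [huw, _root_.map_one, Matrix.one_mulVec]
    rw [← this, map_add, Matrix.add_mulVec]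
  have hkill1 : ((Polynomial.aeval Mc) qc).mulVec v₁ = 0 := by
    rw [hv1_def, Matrix.mulVec_mulVec, ← _root_.map_mul,
      show qc * (u * Polynomial.X) = u * (Polynomial.X * qc) by ring, ← hpc,
      _root_.map_mul, ← Matrix.mulVec_mulVec, hCH, Matrix.mulVec_zero]
  have hkill2 : Mc.mulVec v₂ = 0 := by
    have hX : (Polynomial.aeval Mc) Polynomial.X = Mc := Polynomial.aeval_X (R := ℂ) Mc
    rw [← hX, hv2_def, Matrix.mulVec_mulVec, ← _root_.map_mul,
      show Polynomial.X * (w * qc) = w * (Polynomial.X * qc) by ring, ← hpc,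
      _root_.map_mul, ← Matrix.mulVec_mulVec, hCH, Matrix.mulVec_zero]
  have t1 := tendsto_exp_mulVec_of_poly Mc qc.natDegree qc le_rfl hqcne hqroots v₁ hkill1
  have hconv : Tendsto (fun t : ℝ => (exp (t • Mc)).mulVec xc) atTop (nhds v₂) := by
    have := t1.add (tendsto_const_nhds (α := ℝ) (x := v₂) (f := atTop))
    rw [zero_add] at this
    refine this.congr fun t => ?_
    rw [hsplit, Matrix.mulVec_add, mulVec_exp_of_kernel Mc v₂ hkill2 t]
  -- bridge between real and complex exponentials
  have hbridge : ∀ t : ℝ, (fun i => (((exp (t • M)).mulVec x0 i : ℝ) : ℂ))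
      = (exp (t • Mc)).mulVec xc := by
    intro t
    have hmap : (exp (t • M)).map (algebraMap ℝ ℂ) = exp (t • Mc) := by
      letI : SeminormedRing (Matrix (Fin m) (Fin m) ℝ) := Matrix.linftyOpSemiNormedRing
      letI : NormedRing (Matrix (Fin m) (Fin m) ℝ) := Matrix.linftyOpNormedRing
      letI : NormedAlgebra ℝ (Matrix (Fin m) (Fin m) ℝ) := Matrix.linftyOpNormedAlgebra
      letI : NormedAlgebra ℚ (Matrix (Fin m) (Fin m) ℝ) := Matrix.linftyOpNormedAlgebra
      letI : SeminormedRing (Matrix (Fin m) (Fin m) ℂ) := Matrix.linftyOpSemiNormedRing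
      letI : NormedRing (Matrix (Fin m) (Fin m) ℂ) := Matrix.linftyOpNormedRing
      letI : NormedAlgebra ℝ (Matrix (Fin m) (Fin m) ℂ) := Matrix.linftyOpNormedAlgebra
      have hcont : Continuous ((algebraMap ℝ ℂ).mapMatrix :
          Matrix (Fin m) (Fin m) ℝ →+* Matrix (Fin m) (Fin m) ℂ) := by
        show Continuous fun A : Matrix (Fin m) (Fin m) ℝ => A.map (algebraMap ℝ ℂ)
        exact continuous_id.matrix_map (continuous_algebraMap ℝ ℂ)
      have h := map_exp ((algebraMap ℝ ℂ).mapMatrix) hcont (t • M)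
      simp only [RingHom.mapMatrix_apply] at h
      have hsm : (t • M).map (algebraMap ℝ ℂ) = t • Mc := by
        ext i j
        simp [hMc_def, Matrix.map_apply, Complex.real_smul]
      rw [← hsm]; exact h
    rw [← hmap]
    funext i
    simp only [Matrix.mulVec, dotProduct, Matrix.map_apply, hxc_def]
    push_cast
    rfl
  refine ⟨fun i => (v₂ i).re, ?_, ?_⟩
  · funext i
    have h := congrFun hkill2 i
    simp only [Matrix.mulVec, dotProduct, hMc_def, Matrix.map_apply, Pi.zero_apply] at h ⊢
    have := congrArg Complex.re h
    rw [Complex.re_sum] at this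
    simpa [Complex.re_ofReal_mul] using this
  · rw [tendsto_pi_nhds]
    intro i
    have hci : Tendsto (fun t : ℝ => (((exp (t • M)).mulVec x0 i : ℝ) : ℂ))
        atTop (nhds (v₂ i)) := by
      have := hconv
      rw [tendsto_pi_nhds] at this
      have hi := this i
      refine hi.congr fun t => ?_
      rw [← hbridge t]
    have := (Complex.continuous_re.tendsto (v₂ i)).comp hci
    simpa [Function.comp_def] using this


end
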